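/- The qubit dephasing channel D^Z_b with b = (1−√η)/2 degrades the generalized amplitude damping channel A_{p,η} to a generalized depolarizing channel: D^Z_b ∘ A_{p,η} = D_{1−η,σ}, where D_{q,σ}(ρ) = (1−q)ρ + q·Tr(ρ)σ and σ = diag(p, 1−p). -/

import Mathlib

open Matrix
open scoped ComplexOrder

noncomputable def trNorm {n : Type*} [Fintype n] [DecidableEq n] (A : Matrix n n ℂ) : ℝ :=
  ∑ i, Real.sqrt ((Matrix.isHermitian_conjTranspose_mul_self A).eigenvalues i)

noncomputable def choi {m n : Type*} [Fintype m] [DecidableEq m] [Fintype n]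
    (Φ : Matrix m m ℂ →ₗ[ℂ] Matrix n n ℂ) : Matrix (m × n) (m × n) ℂ :=
  Matrix.of fun p q => Φ (Matrix.single p.1 q.1 1) p.2 q.2

def IsCP {m n : Type*} [Fintype m] [DecidableEq m] [Fintype n]
    (Φ : Matrix m m ℂ →ₗ[ℂ] Matrix n n ℂ) : Prop := (choi Φ).PosSemidef

def IsTP {m n : Type*} [Fintype m] [Fintype n]
    (Φ : Matrix m m ℂ →ₗ[ℂ] Matrix n n ℂ) : Prop := ∀ A, (Φ A).trace = A.trace

def IsDensity {n : Type*} [Fintype n] (ρ : Matrix n n ℂ) : Prop :=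
  ρ.PosSemidef ∧ ρ.trace = 1

noncomputable def replacer {m n : Type*} [Fintype m] (σ : Matrix n n ℂ) :
    Matrix m m ℂ →ₗ[ℂ] Matrix n n ℂ where
  toFun A := A.trace • σ
  map_add' A B := by simp [Matrix.trace_add, add_smul]
  map_smul' c A := by simp [Matrix.trace_smul, smul_smul]

/-- The generalized amplitude damping channel on qubits, given by its four Kraus operators. -/
noncomputable def GAD (p η : ℝ) (ρ : Matrix (Fin 2) (Fin 2) ℂ) : Matrix (Fin 2) (Fin 2) ℂ :=
  let A₁ : Matrix (Fin 2) (Fin 2) ℂ :=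
    (Real.sqrt p : ℂ) • !![1, 0; 0, (Real.sqrt η : ℂ)]
  let A₂ : Matrix (Fin 2) (Fin 2) ℂ :=
    (Real.sqrt p : ℂ) • !![0, (Real.sqrt (1 - η) : ℂ); 0, 0]
  let A₃ : Matrix (Fin 2) (Fin 2) ℂ :=
    (Real.sqrt (1 - p) : ℂ) • !![(Real.sqrt η : ℂ), 0; 0, 1]
  let A₄ : Matrix (Fin 2) (Fin 2) ℂ :=
    (Real.sqrt (1 - p) : ℂ) • !![0, 0; (Real.sqrt (1 - η) : ℂ), 0]
  A₁ * ρ * A₁ᴴ + A₂ * ρ * A₂ᴴ + A₃ * ρ * A₃ᴴ + A₄ * ρ * A₄ᴴ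

theorem stmt19 (p η : ℝ) (hp : p ∈ Set.Icc (0:ℝ) 1) (hη : η ∈ Set.Icc (0:ℝ) 1) :
    ∀ ρ : Matrix (Fin 2) (Fin 2) ℂ,
      (1 - (((1 - Real.sqrt η) / 2 : ℝ) : ℂ)) • GAD p η ρ
        + (((1 - Real.sqrt η) / 2 : ℝ) : ℂ) • (!![1, 0; 0, -1] * GAD p η ρ * !![1, 0; 0, -1])
      = (η : ℂ) • ρ + ((1 - η : ℝ) : ℂ) • (ρ.trace • !![(p : ℂ), 0; 0, ((1 - p : ℝ) : ℂ)]) := by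
  obtain ⟨hp0, hp1⟩ := hp
  obtain ⟨hη0, hη1⟩ := hη
  have ha : (Real.sqrt p : ℂ) * (Real.sqrt p : ℂ) = (p : ℂ) := by
    rw [← Complex.ofReal_mul, Real.mul_self_sqrt hp0]
  have hb : (Real.sqrt η : ℂ) * (Real.sqrt η : ℂ) = (η : ℂ) := by
    rw [← Complex.ofReal_mul, Real.mul_self_sqrt hη0]
  have hc : (Real.sqrt (1 - p) : ℂ) * (Real.sqrt (1 - p) : ℂ)
      = 1 - (Real.sqrt p : ℂ) * (Real.sqrt p : ℂ) := by
    rw [ha, ← Complex.ofReal_mul, Real.mul_self_sqrt (by linarith)]; push_cast; ring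
  have hd : (Real.sqrt (1 - η) : ℂ) * (Real.sqrt (1 - η) : ℂ)
      = 1 - (Real.sqrt η : ℂ) * (Real.sqrt η : ℂ) := by
    rw [hb, ← Complex.ofReal_mul, Real.mul_self_sqrt (by linarith)]; push_cast; ring
  intro ρ
  rw [Matrix.eta_fin_two ρ]
  ext i j
  fin_cases i <;> fin_cases j
  · simp [GAD, Matrix.mul_apply, Matrix.vecMul, dotProduct,
        Matrix.vecHead, Matrix.vecTail, Matrix.conjTranspose_apply,
        Fin.sum_univ_two, Matrix.trace_fin_two, Complex.conj_ofReal]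
    push_cast [← ha, ← hb]
    linear_combination ((Real.sqrt η : ℂ) * (Real.sqrt η : ℂ) * ρ 0 0) * hc
      + ((Real.sqrt p : ℂ) * (Real.sqrt p : ℂ) * ρ 1 1) * hd
  · simp [GAD, Matrix.mul_apply, Matrix.vecMul, dotProduct,
        Matrix.vecHead, Matrix.vecTail, Matrix.conjTranspose_apply,
        Fin.sum_univ_two, Matrix.trace_fin_two, Complex.conj_ofReal]
    push_cast [← ha, ← hb]
    linear_combination ((Real.sqrt η : ℂ) * (Real.sqrt η : ℂ) * ρ 0 1) * hc
  · simp [GAD, Matrix.mul_apply, Matrix.vecMul, dotProduct,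
        Matrix.vecHead, Matrix.vecTail, Matrix.conjTranspose_apply,
        Fin.sum_univ_two, Matrix.trace_fin_two, Complex.conj_ofReal]
    push_cast [← ha, ← hb]
    linear_combination ((Real.sqrt η : ℂ) * (Real.sqrt η : ℂ) * ρ 1 0) * hc
  · simp [GAD, Matrix.mul_apply, Matrix.vecMul, dotProduct,
        Matrix.vecHead, Matrix.vecTail, Matrix.conjTranspose_apply,
        Fin.sum_univ_two, Matrix.trace_fin_two, Complex.conj_ofReal]
    push_cast [← ha, ← hb]
    linear_combination (ρ 1 1 + (Real.sqrt (1 - η) : ℂ) * (Real.sqrt (1 - η) : ℂ) * ρ 0 0) * hc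
      + ((1 - (Real.sqrt p : ℂ) * (Real.sqrt p : ℂ)) * ρ 0 0) * hd
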